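/- Let t_1, …, t_m be integers with 1 ≤ t_i ≤ n_i − 1 for each i. If at least one of the codes C_{t_1}(A_1, v_1), …, C_{t_m}(A_m, v_m) is not LCD, then the generalized affine Cartesian code C_{t_1 + ⋯ + t_m}(𝒜, v_1 × ⋯ × v_m) is not LCD. -/

import Mathlib

open MvPolynomial

/-- The points of the Cartesian set `𝒜 = A 0 × ⋯ × A (m-1)`. -/
abbrev CartPts {K : Type*} {m : ℕ} (A : Fin m → Finset K) :=
  { x : Fin m → K // ∀ i, x i ∈ A i }

/-- The space `S_{<k}` of multivariate polynomials of total degree less than `k`. -/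
def degLT (K : Type*) [Field K] (m k : ℕ) : Submodule K (MvPolynomial (Fin m) K) where
  carrier := {f | ∀ d ∈ f.support, (d.sum fun _ e => e) < k}
  zero_mem' := by simp
  add_mem' := fun {f g} hf hg d hd => by
    rcases Finset.mem_union.mp (MvPolynomial.support_add hd) with h | h
    exacts [hf d h, hg d h]
  smul_mem' := fun c f hf d hd => hf d (MvPolynomial.support_smul hd)

/-- The evaluation map `ev : f ↦ (v_a · f(a))_{a ∈ 𝒜}`. -/
noncomputable def evalLM {K : Type*} [Field K] {m : ℕ} (A : Fin m → Finset K)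
    (v : CartPts A → K) : MvPolynomial (Fin m) K →ₗ[K] (CartPts A → K) :=
  LinearMap.pi fun a => v a • (MvPolynomial.aeval (a.1 : Fin m → K)).toLinearMap

/-- The generalized affine Cartesian code `C_k(𝒜, v)`, the image of `S_{<k}` under `ev_k`. -/
noncomputable def cartCode {K : Type*} [Field K] {m : ℕ} (k : ℕ) (A : Fin m → Finset K)
    (v : CartPts A → K) : Submodule K (CartPts A → K) :=
  Submodule.map (evalLM A v) (degLT K m k)

/-- The dual code `C^⊥` with respect to the standard dot product. -/
def dualCode {K : Type*} [Field K] {ι : Type*} [Fintype ι] (C : Submodule K (ι → K)) :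
    Submodule K (ι → K) where
  carrier := {w | ∀ c ∈ C, ∑ i, w i * c i = 0}
  zero_mem' := by simp
  add_mem' := fun {w w'} hw hw' c hc => by
    simp only [Pi.add_apply, add_mul, Finset.sum_add_distrib, hw c hc, hw' c hc, add_zero]
  smul_mem' := fun r w hw c hc => by
    simp only [Pi.smul_apply, smul_eq_mul, mul_assoc, ← Finset.mul_sum, hw c hc, mul_zero]

/-- A linear code is LCD if it meets its dual trivially. -/
def IsLCD {K : Type*} [Field K] {ι : Type*} [Fintype ι] (C : Submodule K (ι → K)) : Prop :=
  C ⊓ dualCode C = ⊥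

/-- The one-variable generalized Reed–Solomon code on a set `B ⊆ K` with weights `w`. -/
noncomputable def grsCode {K : Type*} [Field K] (B : Finset K) (k : ℕ) (w : {x // x ∈ B} → K) :
    Submodule K ({x // x ∈ B} → K) :=
  Submodule.map (LinearMap.pi fun b => w b • (Polynomial.aeval (b : K)).toLinearMap)
    (Polynomial.degreeLT K k)

section Aux

open Polynomial in
lemma aux_exists_q {K : Type*} [Field K] [DecidableEq K] (B : Finset K)
    (w : {x // x ∈ B} → K) (t : ℕ) (htB : t < B.card) :
    ∃ q : K[X], q.natDegree ≤ t ∧ (∃ b : {x // x ∈ B}, q.eval b.1 ≠ 0) ∧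
      ∀ d < t, ∑ b : {x // x ∈ B}, w b ^ 2 * q.eval b.1 * b.1 ^ d = 0 := by
  classical
  set M : Matrix (Fin t) (Fin (t + 1)) K :=
    fun d e => ∑ b : {x // x ∈ B}, w b ^ 2 * b.1 ^ ((e : ℕ) + d) with hM
  have hker : LinearMap.ker M.mulVecLin ≠ ⊥ := by
    intro hk
    have hinj : Function.Injective M.mulVecLin := LinearMap.ker_eq_bot.mp hk
    have := LinearMap.finrank_le_finrank_of_injective hinj
    rw [Module.finrank_fin_fun, Module.finrank_fin_fun] at this
    omega
  obtain ⟨c, hc, hc0⟩ := (Submodule.ne_bot_iff _).mp hker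
  rw [LinearMap.mem_ker] at hc
  set q : K[X] := ∑ e : Fin (t + 1), Polynomial.monomial (e : ℕ) (c e) with hq
  have hcoeff : ∀ e : Fin (t + 1), q.coeff (e : ℕ) = c e := by
    intro e
    rw [hq, Polynomial.finset_sum_coeff]
    rw [Finset.sum_eq_single e]
    · simp
    · intro e' _ hne
      rw [Polynomial.coeff_monomial, if_neg (by simpa [Fin.val_eq_val] using hne)]
    · simp
  have hdeg : q.natDegree ≤ t := by
    apply Polynomial.natDegree_sum_le_of_forall_le
    intro e _
    exact (Polynomial.natDegree_monomial_le _).trans (by omega)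
  have heval : ∀ x : K, q.eval x = ∑ e : Fin (t + 1), c e * x ^ (e : ℕ) := by
    intro x; rw [hq, Polynomial.eval_finset_sum]; simp [Polynomial.eval_monomial]
  refine ⟨q, hdeg, ?_, ?_⟩
  · by_contra hall
    push_neg at hall
    have hq0 : q = 0 := by
      apply Polynomial.eq_zero_of_natDegree_lt_card_of_eval_eq_zero' q B
      · intro x hx; exact hall ⟨x, hx⟩
      · omega
    apply hc0
    funext e
    have := hcoeff e
    rw [hq0] at this
    simpa using this.symm
  · intro d hd
    have h0 : M.mulVec c ⟨d, hd⟩ = 0 := congrFun hc ⟨d, hd⟩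
    calc ∑ b : {x // x ∈ B}, w b ^ 2 * q.eval b.1 * b.1 ^ d
        = ∑ b : {x // x ∈ B}, ∑ e : Fin (t + 1),
            w b ^ 2 * b.1 ^ ((e : ℕ) + d) * c e := by
          refine Finset.sum_congr rfl fun b _ => ?_
          rw [heval, Finset.mul_sum, Finset.sum_mul]
          exact Finset.sum_congr rfl fun e _ => by ring
      _ = ∑ e : Fin (t + 1), ∑ b : {x // x ∈ B},
            w b ^ 2 * b.1 ^ ((e : ℕ) + d) * c e := Finset.sum_comm
      _ = ∑ e : Fin (t + 1), M ⟨d, hd⟩ e * c e := by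
          refine Finset.sum_congr rfl fun e _ => ?_
          rw [hM, ← Finset.sum_mul]
      _ = 0 := h0

lemma totalDegree_polyAeval_X {K : Type*} [Field K] {m : ℕ} (i : Fin m) (p : Polynomial K) :
    (Polynomial.aeval (X i : MvPolynomial (Fin m) K) p).totalDegree ≤ p.natDegree := by
  rw [Polynomial.aeval_def, Polynomial.eval₂_eq_sum, Polynomial.sum]
  apply (MvPolynomial.totalDegree_finset_sum _ _).trans
  apply Finset.sup_le
  intro e he
  calc ((C (p.coeff e) : MvPolynomial (Fin m) K) * X i ^ e).totalDegree
      ≤ (C (p.coeff e) : MvPolynomial (Fin m) K).totalDegree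
          + (X i ^ e : MvPolynomial (Fin m) K).totalDegree :=
        MvPolynomial.totalDegree_mul _ _
    _ ≤ 0 + e := by
        rw [MvPolynomial.totalDegree_C]
        exact add_le_add le_rfl (MvPolynomial.totalDegree_X_pow i e).le
    _ ≤ p.natDegree := by simpa using Polynomial.le_natDegree_of_mem_supp e he

lemma aeval_polyAeval_X {K : Type*} [Field K] {m : ℕ} (i : Fin m) (p : Polynomial K)
    (a : Fin m → K) :
    MvPolynomial.aeval a (Polynomial.aeval (X i : MvPolynomial (Fin m) K) p) = p.eval (a i) := by
  rw [← Polynomial.aeval_algHom_apply]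
  simp [Polynomial.aeval_def]

/-- The Cartesian points are in bijection with the product of the subtypes. -/
def cartEquiv {K : Type*} {m : ℕ} (A : Fin m → Finset K) :
    (∀ i, {x // x ∈ A i}) ≃ CartPts A where
  toFun g := ⟨fun i => (g i).1, fun i => (g i).2⟩
  invFun a i := ⟨a.1 i, a.2 i⟩
  left_inv g := rfl
  right_inv a := rfl

lemma sum_cartPts_prod {K : Type*} [Field K] [Fintype K] [DecidableEq K] {m : ℕ} (A : Fin m → Finset K)
    (T : ∀ i, {x // x ∈ A i} → K) :
    ∑ a : CartPts A, ∏ i, T i ⟨a.1 i, a.2 i⟩ = ∏ i, ∑ b : {x // x ∈ A i}, T i b := by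
  classical
  rw [Finset.prod_univ_sum (fun _ => Finset.univ) fun i b => T i b]
  rw [Fintype.piFinset_univ]
  rw [← Equiv.sum_comp (cartEquiv A) fun a : CartPts A => ∏ i, T i ⟨a.1 i, a.2 i⟩]
  rfl

end Aux

/-- If at least one of the component codes `C_{t_i}(A_i, v_i)` is not LCD, then
`C_{t_1 + ⋯ + t_m}(𝒜, v_1 × ⋯ × v_m)` is not LCD. -/
theorem cartCode_not_isLCD {K : Type*} [Field K] [Fintype K] [DecidableEq K]
    {m : ℕ} (hm : 1 ≤ m) (A : Fin m → Finset K) (hA : ∀ i, (A i).Nonempty)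
    (w : ∀ i, {x // x ∈ A i} → K) (hw : ∀ i b, w i b ≠ 0)
    (t : Fin m → ℕ) (ht1 : ∀ i, 1 ≤ t i) (ht2 : ∀ i, t i ≤ (A i).card - 1)
    (h : ∃ i, ¬ IsLCD (grsCode (A i) (t i) (w i))) :
    ¬ IsLCD (cartCode (∑ i, t i) A (fun a => ∏ i, w i ⟨a.1 i, a.2 i⟩)) := by
  classical
  obtain ⟨j, hj⟩ := h
  have hcard : ∀ i, t i < (A i).card := fun i => by
    have h1 := ht1 i; have h2 := ht2 i; have h3 := (hA i).card_pos; omega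
  -- Extract a nonzero element of the intersection for index `j`.
  obtain ⟨c, hcmem, hc0⟩ : ∃ c, c ∈ grsCode (A j) (t j) (w j) ⊓
      dualCode (grsCode (A j) (t j) (w j)) ∧ c ≠ 0 := by
    by_contra hq
    push_neg at hq
    exact hj ((Submodule.eq_bot_iff _).mpr hq)
  obtain ⟨hcC, hcD⟩ := Submodule.mem_inf.mp hcmem
  obtain ⟨g, hgdeg, hgev⟩ := Submodule.mem_map.mp hcC
  have hevg : ∀ b : {x // x ∈ A j}, c b = w j b * Polynomial.eval b.1 g := by
    intro b
    rw [← hgev]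
    simp [LinearMap.pi_apply, Polynomial.coe_aeval_eq_eval]
  have hgnz : ∃ b : {x // x ∈ A j}, Polynomial.eval b.1 g ≠ 0 := by
    obtain ⟨b, hb⟩ := Function.ne_iff.mp hc0
    exact ⟨b, fun h0 => hb (by simp [hevg b, h0])⟩
  have hgne : g ≠ 0 := by
    obtain ⟨b, hb⟩ := hgnz
    intro h0; exact hb (by simp [h0])
  have hgdeg' : g.natDegree < t j :=
    (Polynomial.natDegree_lt_iff_degree_lt hgne).mpr (Polynomial.mem_degreeLT.mp hgdeg)
  have hgorth : ∀ d < t j,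
      ∑ b : {x // x ∈ A j}, w j b ^ 2 * Polynomial.eval b.1 g * b.1 ^ d = 0 := by
    intro d hd
    have hX : (Polynomial.X ^ d : Polynomial K) ∈ Polynomial.degreeLT K (t j) := by
      rw [Polynomial.mem_degreeLT, Polynomial.degree_X_pow]
      exact_mod_cast hd
    have hmem : (fun b : {x // x ∈ A j} => w j b * b.1 ^ d) ∈ grsCode (A j) (t j) (w j) := by
      refine Submodule.mem_map.mpr ⟨Polynomial.X ^ d, hX, ?_⟩
      funext b
      simp [LinearMap.pi_apply]
    have horth := hcD _ hmem
    calc ∑ b : {x // x ∈ A j}, w j b ^ 2 * Polynomial.eval b.1 g * b.1 ^ d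
        = ∑ b : {x // x ∈ A j}, c b * (w j b * b.1 ^ d) := by
          refine Finset.sum_congr rfl fun b _ => ?_
          rw [hevg b]; ring
      _ = 0 := horth
  -- Choose polynomials for the other indices.
  choose q0 hq0deg hq0nz hq0orth using fun i => aux_exists_q (A i) (w i) (t i) (hcard i)
  set q : Fin m → Polynomial K := fun i => if i = j then g else q0 i with hqdef
  have hqj : q j = g := by simp [hqdef]
  have hqdeg : ∀ i, (q i).natDegree ≤ t i := by
    intro i
    by_cases hij : i = j
    · subst hij; rw [hqj]; exact hgdeg'.le
    · simp only [hqdef, if_neg hij]; exact hq0deg i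
  have hqdegj : (q j).natDegree < t j := by rw [hqj]; exact hgdeg'
  have hqnz : ∀ i, ∃ b : {x // x ∈ A i}, Polynomial.eval b.1 (q i) ≠ 0 := by
    intro i
    by_cases hij : i = j
    · subst hij; rw [hqj]; exact hgnz
    · simp only [hqdef, if_neg hij]; exact hq0nz i
  have hqorth : ∀ i, ∀ d < t i,
      ∑ b : {x // x ∈ A i}, w i b ^ 2 * Polynomial.eval b.1 (q i) * b.1 ^ d = 0 := by
    intro i
    by_cases hij : i = j
    · subst hij; rw [hqj]; exact hgorth
    · simp only [hqdef, if_neg hij]; exact hq0orth i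
  -- The multivariate polynomial and its evaluation vector.
  set v : CartPts A → K := fun a => ∏ i, w i ⟨a.1 i, a.2 i⟩ with hv
  set G : MvPolynomial (Fin m) K :=
    ∏ i, Polynomial.aeval (X i : MvPolynomial (Fin m) K) (q i) with hG
  have hGdeg : G.totalDegree < ∑ i, t i := by
    refine lt_of_le_of_lt (MvPolynomial.totalDegree_finset_prod _ _) ?_
    refine lt_of_le_of_lt
      (Finset.sum_le_sum fun i _ => totalDegree_polyAeval_X i (q i)) ?_
    exact Finset.sum_lt_sum (fun i _ => hqdeg i) ⟨j, Finset.mem_univ j, hqdegj⟩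
  have hGmem : G ∈ degLT K m (∑ i, t i) := by
    intro d hd
    exact lt_of_le_of_lt (MvPolynomial.le_totalDegree hd) hGdeg
  have hGeval : ∀ a : CartPts A,
      MvPolynomial.aeval a.1 G = ∏ i, Polynomial.eval (a.1 i) (q i) := by
    intro a
    rw [hG, map_prod]
    exact Finset.prod_congr rfl fun i _ => aeval_polyAeval_X i (q i) a.1
  set u : CartPts A → K := evalLM A v G with hu
  have huval : ∀ a : CartPts A, u a = v a * ∏ i, Polynomial.eval (a.1 i) (q i) := by
    intro a
    rw [hu]
    simp only [evalLM, LinearMap.pi_apply, LinearMap.smul_apply, AlgHom.toLinearMap_apply,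
      smul_eq_mul]
    rw [hGeval a]
  have huC : u ∈ cartCode (∑ i, t i) A v := Submodule.mem_map.mpr ⟨G, hGmem, rfl⟩
  have hune : u ≠ 0 := by
    choose b hb using hqnz
    intro h0
    have hzero : u ⟨fun i => (b i).1, fun i => (b i).2⟩ = 0 := by rw [h0]; rfl
    rw [huval] at hzero
    rcases mul_eq_zero.mp hzero with h1 | h1
    · rw [hv] at h1
      obtain ⟨i, _, hi⟩ := Finset.prod_eq_zero_iff.mp h1
      exact hw i _ hi
    · obtain ⟨i, _, hi⟩ := Finset.prod_eq_zero_iff.mp h1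
      exact hb i hi
  have huD : u ∈ dualCode (cartCode (∑ i, t i) A v) := by
    intro c' hc'
    obtain ⟨f, hf, rfl⟩ := Submodule.mem_map.mp hc'
    have hev : ∀ a : CartPts A, evalLM A v f a = v a * MvPolynomial.eval a.1 f := by
      intro a
      simp only [evalLM, LinearMap.pi_apply, LinearMap.smul_apply, AlgHom.toLinearMap_apply,
        smul_eq_mul]
      congr 1
    have key : ∀ a : CartPts A, u a * evalLM A v f a
        = ∑ d ∈ f.support, MvPolynomial.coeff d f *
            ∏ i, (w i ⟨a.1 i, a.2 i⟩ ^ 2 * Polynomial.eval (a.1 i) (q i) * a.1 i ^ d i) := by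
      intro a
      rw [huval a, hev a, MvPolynomial.eval_eq']
      rw [Finset.mul_sum, Finset.mul_sum]
      refine Finset.sum_congr rfl fun d _ => ?_
      have hprod : ∏ i, (w i ⟨a.1 i, a.2 i⟩ ^ 2 * Polynomial.eval (a.1 i) (q i) * a.1 i ^ d i)
          = (∏ i, w i ⟨a.1 i, a.2 i⟩) ^ 2 * (∏ i, Polynomial.eval (a.1 i) (q i))
              * ∏ i, a.1 i ^ d i := by
        rw [Finset.prod_mul_distrib, Finset.prod_mul_distrib, Finset.prod_pow]
      rw [hprod, hv]
      ring
    calc ∑ a : CartPts A, u a * evalLM A v f a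
        = ∑ a : CartPts A, ∑ d ∈ f.support, MvPolynomial.coeff d f *
            ∏ i, (w i ⟨a.1 i, a.2 i⟩ ^ 2 * Polynomial.eval (a.1 i) (q i) * a.1 i ^ d i) :=
          Finset.sum_congr rfl fun a _ => key a
      _ = ∑ d ∈ f.support, ∑ a : CartPts A, MvPolynomial.coeff d f *
            ∏ i, (w i ⟨a.1 i, a.2 i⟩ ^ 2 * Polynomial.eval (a.1 i) (q i) * a.1 i ^ d i) :=
          Finset.sum_comm
      _ = ∑ d ∈ f.support, MvPolynomial.coeff d f *
            ∏ i, ∑ b : {x // x ∈ A i},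
              w i b ^ 2 * Polynomial.eval b.1 (q i) * b.1 ^ d i := by
          refine Finset.sum_congr rfl fun d _ => ?_
          rw [← Finset.mul_sum]
          congr 1
          exact sum_cartPts_prod A fun i b => w i b ^ 2 * Polynomial.eval b.1 (q i) * b.1 ^ d i
      _ = 0 := by
          refine Finset.sum_eq_zero fun d hd => ?_
          have hdsum : ∑ i, d i < ∑ i, t i := by
            have h1 := hf d hd
            have h2 : (d.sum fun _ e => e) = ∑ i, d i := by
              rw [Finsupp.sum]
              exact Finset.sum_subset (Finset.subset_univ _)
                (fun i _ hi => Finsupp.notMem_support_iff.mp hi)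
            omega
          have : ∃ i, d i < t i := by
            by_contra hall
            push_neg at hall
            exact absurd (Finset.sum_le_sum fun i _ => hall i) (not_le.mpr hdsum)
          obtain ⟨i0, hi0⟩ := this
          rw [Finset.prod_eq_zero (Finset.mem_univ i0) (hqorth i0 (d i0) hi0), mul_zero]
  intro hLCD
  have : u ∈ (⊥ : Submodule K (CartPts A → K)) := hLCD ▸ Submodule.mem_inf.mpr ⟨huC, huD⟩
  exact hune (Submodule.mem_bot K |>.mp this)
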